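/- Let p be a prime, Q = p^d a power of p, and G = ∏_{e≥1} C_{p^e}^{m_e} a finite abelian p-group. For every integer k ≥ 0, the number of continuous group homomorphisms φ : U^1 → G from the first higher unit group U^1 of 𝔽_Q((t)) to G satisfying φ(U^{k+1}) = 1 is exactly Q^{τ(k)}, where τ(k) = Σ_{e≥1} m_e·(k − ⌊k/p^e⌋). -/

import Mathlib

open PowerSeries

noncomputable section

/-- The `k`-th higher unit group `U^k = 1 + t^k 𝔽_Q⟦t⟧` of the Laurent series field
`𝔽_Q((t))`, as a subgroup of the unit group of the valuation ring `𝔽_Q⟦t⟧`. -/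
def HU (K : Type) [CommRing K] (k : ℕ) : Subgroup (PowerSeries K)ˣ where
  carrier := {u | (PowerSeries.X : PowerSeries K) ^ k ∣ ((u : PowerSeries K) - 1)}
  one_mem' := by simp
  mul_mem' := by
    intro a b ha hb
    have h : ((a * b : (PowerSeries K)ˣ) : PowerSeries K) - 1
        = ((a : PowerSeries K) - 1) * (b : PowerSeries K) + ((b : PowerSeries K) - 1) := by
      push_cast; ring
    rw [Set.mem_setOf_eq, h]
    exact dvd_add (ha.mul_right _) hb
  inv_mem' := by
    intro a ha
    have h : ((a⁻¹ : (PowerSeries K)ˣ) : PowerSeries K) - 1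
        = -(((a : PowerSeries K) - 1) * ((a⁻¹ : (PowerSeries K)ˣ) : PowerSeries K)) := by
      rw [sub_mul, one_mul, Units.mul_inv]; ring
    rw [Set.mem_setOf_eq, h]
    exact (dvd_neg).mpr (ha.mul_right _)

/-- The t-adic topology on the power series ring over a (discrete) coefficient ring:
the coefficientwise (product) topology with discrete coefficients. -/
def psTop (K : Type) [CommRing K] : TopologicalSpace (PowerSeries K) :=
  letI : TopologicalSpace K := ⊥
  TopologicalSpace.induced (fun f (n : ℕ) => PowerSeries.coeff n f) inferInstance

/-- The t-adic topology on the unit group of `𝔽_Q⟦t⟧`. -/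
def unitsTop (K : Type) [CommRing K] : TopologicalSpace (PowerSeries K)ˣ :=
  TopologicalSpace.induced Units.val (psTop K)

/-- The t-adic topology on the higher unit group `U^k`. -/
def huTop (K : Type) [CommRing K] (k : ℕ) : TopologicalSpace ↥(HU K k) :=
  TopologicalSpace.induced Subtype.val (unitsTop K)

/-- Continuity of a homomorphism from `U^1` (with the t-adic topology) to a discrete group. -/
def IsContHom {K : Type} [CommRing K] {G : Type} [Group G] (φ : ↥(HU K 1) →* G) : Prop :=
  letI := huTop K 1
  letI : TopologicalSpace G := ⊥
  Continuous ⇑φ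

/-- The last jump of `φ : U^1 → G`: the least `k ≥ 0` with `φ(U^{k+1}) = 1`. -/
def lastjump {K : Type} [CommRing K] {G : Type} [Group G] (φ : ↥(HU K 1) →* G) : ℕ :=
  sInf {k : ℕ | ∀ u : ↥(HU K 1), (u : (PowerSeries K)ˣ) ∈ HU K (k + 1) → φ u = 1}

/-- The finite abelian `p`-group `G = ∏_{e ≥ 1} C_{p^e}^{m_e}` (with `m_e = 0` for `e > t`),
written multiplicatively. -/
abbrev Gp (p t : ℕ) (m : ℕ → ℕ) : Type :=
  Multiplicative ((e : Fin t) → Fin (m (e.1 + 1)) → ZMod (p ^ (e.1 + 1)))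

/-- The rationals `c_0 = 0` and `c_i = Σ_{e≥1} m_e − Σ_{e=1}^{i−1} m_e p^{−e}` for `i ≥ 1`. -/
def cseq (p t : ℕ) (m : ℕ → ℕ) : ℕ → ℚ
  | 0 => 0
  | (i + 1) => (∑ e ∈ Finset.Icc 1 t, (m e : ℚ)) - ∑ e ∈ Finset.Icc 1 i, (m e : ℚ) / (p : ℚ) ^ e

/-! ### Auxiliary counting lemmas -/

section AuxCounting

lemma aux_card_smul_ker (a b : ℕ) (ha : a ≠ 0) :
    Nat.card {x : ZMod a // b • x = 0} = Nat.gcd a b := by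
  haveI : NeZero a := ⟨ha⟩
  set c : ZMod a := (b : ZMod a) with hc
  set f : ZMod a →+ ZMod a := AddMonoidHom.mulLeft c with hf
  have hker : ∀ x : ZMod a, b • x = 0 ↔ x ∈ f.ker := by
    intro x
    rw [AddMonoidHom.mem_ker]
    show b • x = 0 ↔ c * x = 0
    rw [hc, nsmul_eq_mul]
  have hrange : f.range = AddSubgroup.zmultiples c := by
    ext x
    simp only [AddMonoidHom.mem_range, AddSubgroup.mem_zmultiples_iff]
    constructor
    · rintro ⟨y, rfl⟩
      obtain ⟨z, rfl⟩ := ZMod.intCast_surjective (n := a) y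
      exact ⟨z, by show z • c = c * _; rw [zsmul_eq_mul]; ring⟩
    · rintro ⟨z, rfl⟩
      exact ⟨(z : ZMod a), by show c * _ = z • c; rw [zsmul_eq_mul]; ring⟩
  have h1 : Nat.card (ZMod a ⧸ f.ker) = Nat.card f.range :=
    Nat.card_congr (QuotientAddGroup.quotientKerEquivRange f).toEquiv
  have h2 : Nat.card (ZMod a) = Nat.card (ZMod a ⧸ f.ker) * Nat.card f.ker :=
    AddSubgroup.card_eq_card_quotient_mul_card_addSubgroup _
  have h3 : Nat.card f.range = a / Nat.gcd a b := by
    rw [hrange, Nat.card_zmultiples, hc, ZMod.addOrderOf_coe b ha]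
  have hg : Nat.gcd a b ∣ a := Nat.gcd_dvd_left a b
  have hgpos : 0 < Nat.gcd a b :=
    Nat.pos_of_ne_zero fun h => ha (Nat.eq_zero_of_gcd_eq_zero_left h)
  have hq : 0 < a / Nat.gcd a b := Nat.div_pos (Nat.le_of_dvd (Nat.pos_of_ne_zero ha) hg) hgpos
  have hcard : Nat.card {x : ZMod a // b • x = 0} = Nat.card f.ker :=
    Nat.card_congr (Equiv.subtypeEquivRight hker)
  have h4 : Nat.card (ZMod a) = a := Nat.card_zmod a
  have h5 := h2
  rw [h4, h1, h3] at h5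
  have h6 : (a / Nat.gcd a b) * Nat.gcd a b = a := Nat.div_mul_cancel hg
  rw [hcard]
  exact Nat.eq_of_mul_eq_mul_left hq (h5.symm.trans h6.symm)

/-- Additive homs out of `ZMod d` correspond to `d`-torsion points. -/
noncomputable def auxZModTorsionEquivHom (d : ℕ) (B : Type) [AddCommGroup B] :
    {x : B // d • x = 0} ≃ (ZMod d →+ B) :=
  ((zmultiplesHom B).subtypeEquiv (fun x => by
      rw [zmultiplesHom_apply, natCast_zsmul])).trans (ZMod.lift d)

lemma aux_card_mult_hom (d n : ℕ) (hn : n ≠ 0) :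
    Nat.card (Multiplicative (ZMod d) →* Multiplicative (ZMod n)) = Nat.gcd n d := by
  rw [← Nat.card_congr (AddMonoidHom.toMultiplicative (α := ZMod d) (β := ZMod n)),
    ← Nat.card_congr (auxZModTorsionEquivHom d (ZMod n))]
  exact aux_card_smul_ker n d hn

lemma aux_card_mult_torsion (d n : ℕ) (hd : d ≠ 0) :
    Nat.card {y : Multiplicative (ZMod d) // y ^ n = 1} = Nat.gcd d n := by
  rw [Nat.card_congr ((Multiplicative.toAdd (α := ZMod d)).subtypeEquiv
    (q := fun x => n • x = 0) (fun y => by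
      show y ^ n = 1 ↔ n • y.toAdd = 0
      constructor
      · intro h
        rw [← toAdd_pow, h, toAdd_one]
      · intro h
        have h2 : (y ^ n).toAdd = (1 : Multiplicative (ZMod d)).toAdd := by
          rw [toAdd_pow, toAdd_one, h]
        exact Multiplicative.toAdd.injective h2))]
  exact aux_card_smul_ker d n hd

lemma aux_card_hom_eq_card_torsion (A : Type) [CommGroup A] [Finite A] (n : ℕ) (hn : n ≠ 0) :
    Nat.card (A →* Multiplicative (ZMod n)) = Nat.card {a : A // a ^ n = 1} := by
  classical
  obtain ⟨ι, hι, dd, hdd, ⟨e⟩⟩ := CommGroup.equiv_prod_multiplicative_zmod_of_finite A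
  have hnz : ∀ i, dd i ≠ 0 := fun i => by have := hdd i; omega
  calc Nat.card (A →* Multiplicative (ZMod n))
      = Nat.card ((∀ i, Multiplicative (ZMod (dd i))) →* Multiplicative (ZMod n)) :=
        Nat.card_congr (MulEquiv.monoidHomCongrLeftEquiv e)
    _ = Nat.card (∀ i, Multiplicative (ZMod (dd i)) →* Multiplicative (ZMod n)) :=
        Nat.card_congr (Pi.monoidHomMulEquiv _ _).toEquiv
    _ = ∏ i, Nat.card (Multiplicative (ZMod (dd i)) →* Multiplicative (ZMod n)) := Nat.card_pi
    _ = ∏ i, Nat.card {y : Multiplicative (ZMod (dd i)) // y ^ n = 1} := by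
        refine Finset.prod_congr rfl fun i _ => ?_
        rw [aux_card_mult_hom _ _ hn, aux_card_mult_torsion _ _ (hnz i), Nat.gcd_comm]
    _ = Nat.card (∀ i, {y : Multiplicative (ZMod (dd i)) // y ^ n = 1}) := Nat.card_pi.symm
    _ = Nat.card {x : ∀ i, Multiplicative (ZMod (dd i)) // x ^ n = 1} :=
        (Nat.card_congr ((Equiv.subtypeEquivRight (fun x => by
          simp [funext_iff])).trans Equiv.subtypePiEquivPi)).symm
    _ = Nat.card {a : A // a ^ n = 1} :=
        (Nat.card_congr (e.toEquiv.subtypeEquiv (fun a => by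
          show a ^ n = 1 ↔ (e a) ^ n = 1
          rw [← map_pow, ← map_one e]
          exact e.injective.eq_iff.symm))).symm

/-- Homs into a product split as products of homs. -/
def auxHomPi {A : Type} [MulOneClass A] {ι : Type} (B : ι → Type)
    [∀ i, MulOneClass (B i)] :
    (A →* ∀ i, B i) ≃ ∀ i, (A →* B i) where
  toFun φ i := (Pi.evalMonoidHom B i).comp φ
  invFun ψ := Pi.monoidHom ψ
  left_inv φ := rfl
  right_inv ψ := rfl

end AuxCounting

section AuxPS

open PowerSeries

variable {K : Type} [Field K]

lemma aux_mem_HU {j : ℕ} {u : (PowerSeries K)ˣ} :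
    u ∈ HU K j ↔ ∀ i < j, (coeff i) (u : PowerSeries K) = (coeff i) (1 : PowerSeries K) := by
  show (X : PowerSeries K) ^ j ∣ ((u : PowerSeries K) - 1) ↔ _
  rw [X_pow_dvd_iff]
  refine forall₂_congr fun i hi => ?_
  rw [map_sub, sub_eq_zero]

lemma aux_mul_inv_mem_HU {j : ℕ} (u v : (PowerSeries K)ˣ) :
    u * v⁻¹ ∈ HU K j ↔
      ∀ i < j, coeff i (u : PowerSeries K) = coeff i (v : PowerSeries K) := by
  have e1 : (((u * v⁻¹ : (PowerSeries K)ˣ) : PowerSeries K) - 1) * (v : PowerSeries K)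
      = (u : PowerSeries K) - v := by
    rw [Units.val_mul, sub_mul, one_mul, mul_assoc, Units.inv_mul, mul_one]
  have e2 : ((u * v⁻¹ : (PowerSeries K)ˣ) : PowerSeries K) - 1
      = ((u : PowerSeries K) - v) * ((v⁻¹ : (PowerSeries K)ˣ) : PowerSeries K) := by
    rw [← e1, mul_assoc, Units.mul_inv, mul_one]
  show (X : PowerSeries K) ^ j ∣ _ ↔ _
  constructor
  · intro h
    have h2 : (X : PowerSeries K) ^ j ∣ ((u : PowerSeries K) - v) := e1 ▸ h.mul_right _
    intro i hi
    have h3 := X_pow_dvd_iff.mp h2 i hi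
    rwa [map_sub, sub_eq_zero] at h3
  · intro h
    rw [e2]
    refine Dvd.dvd.mul_right ?_ _
    rw [X_pow_dvd_iff]
    intro i hi
    rw [map_sub, sub_eq_zero]
    exact h i hi

variable (K) in
/-- The subgroup of `U^1` given by `U^{k+1}`. -/
def auxN (k : ℕ) : Subgroup ↥(HU K 1) := (HU K (k + 1)).comap (HU K 1).subtype

lemma aux_mk_eq_mk {k : ℕ} (u v : ↥(HU K 1)) :
    (QuotientGroup.mk u : ↥(HU K 1) ⧸ auxN K k) = QuotientGroup.mk v
      ↔ ∀ i < k + 1, coeff i ((u : (PowerSeries K)ˣ) : PowerSeries K)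
          = coeff i ((v : (PowerSeries K)ˣ) : PowerSeries K) := by
  rw [QuotientGroup.eq]
  show u⁻¹ * v ∈ Subgroup.comap _ _ ↔ _
  rw [Subgroup.mem_comap]
  have hco : (HU K 1).subtype (u⁻¹ * v)
      = (v : (PowerSeries K)ˣ) * ((u : (PowerSeries K)ˣ))⁻¹ := by
    simp [mul_comm]
  rw [hco, aux_mul_inv_mem_HU]
  exact ⟨fun h i hi => (h i hi).symm, fun h i hi => (h i hi).symm⟩

/-- Coefficient extraction on the quotient `U^1/U^{k+1}`. -/
noncomputable def auxCoef (k : ℕ) (a : ↥(HU K 1) ⧸ auxN K k) : Fin (k + 1) → K :=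
  Quotient.liftOn' a
    (fun u (i : Fin (k + 1)) => coeff i ((u : (PowerSeries K)ˣ) : PowerSeries K))
    (fun u v h => by
      funext i
      have h' : (QuotientGroup.mk u : ↥(HU K 1) ⧸ auxN K k) = QuotientGroup.mk v :=
        Quotient.sound' h
      exact (aux_mk_eq_mk u v).mp h' i i.2)

lemma aux_finite [Finite K] (k : ℕ) : Finite (↥(HU K 1) ⧸ auxN K k) := by
  apply Finite.of_injective (auxCoef (K := K) k)
  intro a b h
  induction a using QuotientGroup.induction_on with | _ u => ?_
  induction b using QuotientGroup.induction_on with | _ v => ?_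
  rw [aux_mk_eq_mk]
  intro i hi
  exact congrFun h ⟨i, hi⟩

/-- The power series with constant coefficient `1` and higher coefficients `g`. -/
noncomputable def auxSer (g : ℕ → K) : PowerSeries K :=
  PowerSeries.mk (fun n => if n = 0 then 1 else g n)

lemma aux_coeff_auxSer (g : ℕ → K) (n : ℕ) :
    coeff n (auxSer g) = if n = 0 then 1 else g n :=
  coeff_mk _ _

lemma auxSer_unit (g : ℕ → K) : IsUnit (auxSer g) := by
  rw [PowerSeries.isUnit_iff_constantCoeff]
  have h : constantCoeff (auxSer g) = 1 := by
    rw [← coeff_zero_eq_constantCoeff_apply, aux_coeff_auxSer]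
    simp
  rw [h]
  exact isUnit_one

/-- The element of `U^1` with coefficients `g`. -/
noncomputable def auxU (g : ℕ → K) : ↥(HU K 1) :=
  ⟨(auxSer_unit g).unit, by
    rw [aux_mem_HU]
    intro i hi
    interval_cases i
    rw [IsUnit.unit_spec, aux_coeff_auxSer]
    simp⟩

lemma auxU_coe (g : ℕ → K) :
    (((auxU g : ↥(HU K 1)) : (PowerSeries K)ˣ) : PowerSeries K) = auxSer g :=
  (auxSer_unit g).unit_spec

lemma aux_charP (p : ℕ) [CharP K p] : CharP (PowerSeries K) p := by
  constructor
  intro n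
  rw [← CharP.cast_eq_zero_iff K p n]
  constructor
  · intro h
    have h2 := congrArg (constantCoeff) h
    simpa using h2
  · intro h
    have h2 : ((n : ℕ) : PowerSeries K) = PowerSeries.C ((n : ℕ) : K) :=
      (map_natCast (PowerSeries.C) n).symm
    rw [h2, h, map_zero]

lemma aux_order_pow (x : PowerSeries K) (n : ℕ) : (x ^ n).order = n • x.order := by
  induction n with
  | zero => simp
  | succ n ih => rw [pow_succ, PowerSeries.order_mul, ih, succ_nsmul]

lemma aux_root_dvd {x : PowerSeries K} {n' k : ℕ} (hn' : 0 < n')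
    (h : (X : PowerSeries K) ^ (k + 1) ∣ x ^ n') :
    (X : PowerSeries K) ^ (k / n' + 1) ∣ x := by
  rcases eq_or_ne x 0 with rfl | hx
  · exact dvd_zero _
  have ho : x.order ≠ ⊤ := fun h2 => hx (PowerSeries.order_eq_top.mp h2)
  obtain ⟨o, ho⟩ := WithTop.ne_top_iff_exists.mp ho
  have ho2 : x.order = ((o : ℕ) : ℕ∞) := by exact_mod_cast ho.symm
  have h1 : ((k + 1 : ℕ) : ℕ∞) ≤ (x ^ n').order :=
    PowerSeries.nat_le_order _ _ (fun i hi => X_pow_dvd_iff.mp h i hi)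
  rw [aux_order_pow, ho2, nsmul_eq_mul, ← Nat.cast_mul] at h1
  have h3 : k + 1 ≤ n' * o := Nat.cast_le.mp h1
  have h4 : k / n' + 1 ≤ o := by
    have h5 : k / n' < o := (Nat.div_lt_iff_lt_mul hn').mpr (by rw [Nat.mul_comm]; omega)
    omega
  rw [X_pow_dvd_iff]
  intro i hi
  refine PowerSeries.coeff_of_lt_order i ?_
  rw [ho2]
  exact Nat.cast_lt.mpr (by omega)

end AuxPS

section AuxTorsion

open PowerSeries

variable {K : Type} [Field K]

lemma aux_key (p : ℕ) (hp : p.Prime) [CharP K p] (k e' : ℕ) (u : ↥(HU K 1)) :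
    (QuotientGroup.mk u : ↥(HU K 1) ⧸ auxN K k) ^ (p ^ e') = 1
      ↔ ∀ i < k / p ^ e' + 1,
          coeff i ((u : (PowerSeries K)ˣ) : PowerSeries K) = coeff i (1 : PowerSeries K) := by
  haveI : CharP (PowerSeries K) p := aux_charP p
  haveI : Fact p.Prime := ⟨hp⟩
  haveI : ExpChar (PowerSeries K) p := ExpChar.prime hp
  set n' := p ^ e' with hn'
  have hn'pos : 0 < n' := pow_pos hp.pos _
  set f := k / n' with hf
  set xu : PowerSeries K := ((u : (PowerSeries K)ˣ) : PowerSeries K) - 1 with hxu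
  have hu1 : ((u : (PowerSeries K)ˣ) : PowerSeries K) = 1 + xu := by rw [hxu]; ring
  have hpow : (((u ^ n' : ↥(HU K 1)) : (PowerSeries K)ˣ) : PowerSeries K) = 1 + xu ^ n' := by
    push_cast
    rw [hu1, hn', add_pow_char_pow, one_pow]
  have hone : (((1 : ↥(HU K 1)) : (PowerSeries K)ˣ) : PowerSeries K) = 1 := rfl
  have h1 : (QuotientGroup.mk u : ↥(HU K 1) ⧸ auxN K k) ^ n'
      = QuotientGroup.mk (u ^ n') := rfl
  rw [h1, show (1 : ↥(HU K 1) ⧸ auxN K k) = QuotientGroup.mk 1 from rfl, aux_mk_eq_mk]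
  constructor
  · intro h i hi
    have hdvd : (X : PowerSeries K) ^ (k + 1) ∣ xu ^ n' := by
      rw [X_pow_dvd_iff]
      intro j hj
      have h2 := h j hj
      rw [hpow, hone, map_add] at h2
      have h3 : coeff j (1 : PowerSeries K) + coeff j (xu ^ n') = coeff j 1 := h2
      exact add_eq_left.mp h3
    have hroot := aux_root_dvd hn'pos hdvd
    have h4 := X_pow_dvd_iff.mp hroot i hi
    rw [hxu, map_sub] at h4
    have h5 : coeff i ((u : (PowerSeries K)ˣ) : PowerSeries K) - coeff i 1 = 0 := h4
    exact sub_eq_zero.mp h5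
  · intro h i hi
    rw [hpow, hone]
    have hxdvd : (X : PowerSeries K) ^ (f + 1) ∣ xu := by
      rw [X_pow_dvd_iff]
      intro j hj
      rw [hxu, map_sub, sub_eq_zero]
      exact h j hj
    have h2 : (X : PowerSeries K) ^ ((f + 1) * n') ∣ xu ^ n' := by
      rw [pow_mul]
      exact pow_dvd_pow_of_dvd hxdvd n'
    have hkf : k + 1 ≤ (f + 1) * n' := by
      have e1 := Nat.div_add_mod k n'
      have e2 := Nat.mod_lt k hn'pos
      have e3 : (f + 1) * n' = n' * f + n' := by ring
      rw [← hf] at e1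
      omega
    have h4 : coeff i (xu ^ n') = 0 :=
      X_pow_dvd_iff.mp (dvd_trans (pow_dvd_pow X hkf) h2) i hi
    rw [map_add, h4, add_zero]

lemma aux_card_torsion (p : ℕ) (hp : p.Prime) [CharP K p] [Fintype K] (k e' : ℕ) :
    Nat.card {a : ↥(HU K 1) ⧸ auxN K k // a ^ (p ^ e') = 1}
      = Fintype.card K ^ (k - k / p ^ e') := by
  obtain ⟨f, hf⟩ : ∃ f, k / p ^ e' = f := ⟨_, rfl⟩
  have hfk : f ≤ k := hf ▸ Nat.div_le_self k (p ^ e')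
  rw [hf]
  set g : (Fin (k - f) → K) → (ℕ → K) := fun c n =>
    if h : f + 1 ≤ n ∧ n < k + 1 then c ⟨n - (f + 1), by omega⟩ else 0 with hg
  have hser : ∀ (c : Fin (k - f) → K) (i : ℕ), i < k + 1 →
      coeff i (auxSer (g c))
        = if h : f + 1 ≤ i ∧ i < k + 1 then c ⟨i - (f + 1), by omega⟩ else
            (if i = 0 then 1 else 0) := by
    intro c i hik
    rw [aux_coeff_auxSer]
    by_cases hcond : f + 1 ≤ i ∧ i < k + 1
    · have hi0 : ¬(i = 0) := by omega
      rw [dif_pos hcond, if_neg hi0]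
      simp only [hg]
      rw [dif_pos hcond]
    · rw [dif_neg hcond]
      by_cases hi0 : i = 0
      · rw [if_pos hi0, if_pos hi0]
      · rw [if_neg hi0, if_neg hi0]
        simp only [hg]
        rw [dif_neg hcond]
  set Φ : (Fin (k - f) → K) → {a : ↥(HU K 1) ⧸ auxN K k // a ^ (p ^ e') = 1} := fun c =>
    ⟨QuotientGroup.mk (auxU (g c)), by
      rw [aux_key p hp k e']
      intro i hi
      rw [hf] at hi
      have hik : i < k + 1 := by omega
      have hni : ¬(f + 1 ≤ i ∧ i < k + 1) := by omega
      rw [auxU_coe, hser c i hik, dif_neg hni, PowerSeries.coeff_one]⟩ with hΦ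
  have hbij : Function.Bijective Φ := by
    constructor
    · intro c c' hcc
      have h1 : (QuotientGroup.mk (auxU (g c)) : ↥(HU K 1) ⧸ auxN K k)
          = QuotientGroup.mk (auxU (g c')) := congrArg Subtype.val hcc
      rw [aux_mk_eq_mk] at h1
      funext i
      have hi : f + 1 + i.1 < k + 1 := by
        have := i.2
        omega
      have h2 := h1 (f + 1 + i.1) hi
      have hcond : f + 1 ≤ f + 1 + i.1 ∧ f + 1 + i.1 < k + 1 := ⟨by omega, hi⟩
      have hidx : (⟨f + 1 + i.1 - (f + 1), by omega⟩ : Fin (k - f)) = i := by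
        apply Fin.ext
        show f + 1 + i.1 - (f + 1) = i.1
        omega
      rw [auxU_coe, auxU_coe, hser c _ hi, hser c' _ hi, dif_pos hcond, dif_pos hcond,
        hidx] at h2
      exact h2
    · rintro ⟨a, ha⟩
      induction a using QuotientGroup.induction_on with | _ u => ?_
      have hu := (aux_key p hp k e' u).mp ha
      rw [hf] at hu
      refine ⟨fun i => coeff (f + 1 + i.1) ((u : (PowerSeries K)ˣ) : PowerSeries K), ?_⟩
      apply Subtype.ext
      show QuotientGroup.mk (auxU _) = QuotientGroup.mk u
      rw [aux_mk_eq_mk]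
      intro i hi
      rw [auxU_coe]
      rw [hser (fun j : Fin (k - f) =>
        coeff (f + 1 + j.1) ((u : (PowerSeries K)ˣ) : PowerSeries K)) i hi]
      by_cases hcond : f + 1 ≤ i ∧ i < k + 1
      · rw [dif_pos hcond]
        exact congrArg (fun n => coeff n ((u : (PowerSeries K)ˣ) : PowerSeries K))
          (by omega : f + 1 + (i - (f + 1)) = i)
      · rw [dif_neg hcond]
        have h2 := hu i (by omega)
        rw [h2, PowerSeries.coeff_one]
  rw [← Nat.card_congr (Equiv.ofBijective Φ hbij), Nat.card_fun]
  simp [Nat.card_eq_fintype_card]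

end AuxTorsion
section AuxCont

open PowerSeries

variable {K : Type} [Field K]

lemma aux_cont {G : Type} [Group G] (k : ℕ) (φ : ↥(HU K 1) →* G)
    (hφ : ∀ u : ↥(HU K 1), (u : (PowerSeries K)ˣ) ∈ HU K (k + 1) → φ u = 1) :
    IsContHom φ := by
  letI tG : TopologicalSpace G := ⊥
  haveI hdG : @DiscreteTopology G ⊥ := ⟨rfl⟩
  letI tK : TopologicalSpace K := ⊥
  haveI hdK : DiscreteTopology K := ⟨rfl⟩
  letI tP : TopologicalSpace (PowerSeries K) := psTop K
  letI tU : TopologicalSpace (PowerSeries K)ˣ := unitsTop K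
  letI tH : TopologicalSpace ↥(HU K 1) := huTop K 1
  show Continuous ⇑φ
  rw [continuous_discrete_rng]
  intro g
  let cm : ↥(HU K 1) → ℕ → K :=
    fun v n => coeff n ((v : (PowerSeries K)ˣ) : PowerSeries K)
  let T : Set (ℕ → K) := ⋃ (u : ↥(HU K 1)) (_ : φ u = g),
    ⋂ i ∈ Finset.range (k + 1), {h : ℕ → K | h i = cm u i}
  have hT : IsOpen T := by
    apply isOpen_iUnion
    intro u
    apply isOpen_iUnion
    intro _
    apply isOpen_biInter_finset
    intro i _
    show IsOpen ((fun h : ℕ → K => h i) ⁻¹' {cm u i})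
    exact (continuous_apply i).isOpen_preimage _ (isOpen_discrete _)
  have heq : ⇑φ ⁻¹' {g} = cm ⁻¹' T := by
    ext v
    simp only [Set.mem_preimage, Set.mem_singleton_iff, Set.mem_iUnion, Set.mem_iInter,
      Set.mem_setOf_eq, Finset.mem_range, T]
    constructor
    · intro hv
      exact ⟨v, hv, fun i _ => rfl⟩
    · rintro ⟨u, hu, hcm⟩
      have hco : ((v * u⁻¹ : ↥(HU K 1)) : (PowerSeries K)ˣ)
          = (v : (PowerSeries K)ˣ) * ((u : (PowerSeries K)ˣ))⁻¹ := by
        push_cast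
        rfl
      have hmem : ((v * u⁻¹ : ↥(HU K 1)) : (PowerSeries K)ˣ) ∈ HU K (k + 1) := by
        rw [hco, aux_mul_inv_mem_HU]
        intro i hi
        exact hcm i hi
      have h1 : φ (v * u⁻¹) = 1 := hφ _ hmem
      have h2 : φ v = φ (v * u⁻¹) * φ u := by
        rw [← map_mul, inv_mul_cancel_right]
      rw [h2, h1, one_mul, hu]
  rw [heq]
  have hpre : cm ⁻¹' T
      = Subtype.val ⁻¹' (Units.val ⁻¹'
          ((fun (h : PowerSeries K) (n : ℕ) => coeff n h) ⁻¹' T)) := rfl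
  rw [hpre]
  exact isOpen_induced (isOpen_induced (isOpen_induced hT))

lemma aux_E1 {G : Type} [Group G] (k : ℕ) :
    Nat.card {φ : ↥(HU K 1) →* G // IsContHom φ ∧
        ∀ u : ↥(HU K 1), (u : (PowerSeries K)ˣ) ∈ HU K (k + 1) → φ u = 1}
      = Nat.card ((↥(HU K 1) ⧸ auxN K k) →* G) := by
  refine Nat.card_congr ⟨fun φ => QuotientGroup.lift (auxN K k) φ.1
    (fun u hu => φ.2.2 u hu), fun ψ => ⟨ψ.comp (QuotientGroup.mk' _), ?_, fun u hu => ?_⟩,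
    fun φ => ?_, fun ψ => ?_⟩
  · apply aux_cont k
    intro u hu
    show ψ (QuotientGroup.mk u) = 1
    rw [(QuotientGroup.eq_one_iff u).mpr hu, map_one]
  · show ψ (QuotientGroup.mk u) = 1
    rw [(QuotientGroup.eq_one_iff u).mpr hu, map_one]
  · exact Subtype.ext (MonoidHom.ext fun u => rfl)
  · exact MonoidHom.ext fun a => QuotientGroup.induction_on a fun u => rfl

end AuxCont

/-- For `Q = p^d` and `G = ∏ C_{p^e}^{m_e}`, the number of continuous
homomorphisms `φ : U^1 → G` from the first higher unit group of `𝔽_Q((t))` with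
`φ(U^{k+1}) = 1` is exactly `Q^{τ(k)}`, where `τ(k) = Σ_{e≥1} m_e (k − ⌊k/p^e⌋)`. -/
theorem stmt1
    (p d Q t : ℕ) (hp : p.Prime) (hd : 1 ≤ d) (hQ : Q = p ^ d)
    (m : ℕ → ℕ) (hm : ∀ e, t < e → m e = 0)
    (K : Type) [Field K] [Fintype K] (hK : Fintype.card K = Q)
    (k : ℕ) :
    Nat.card {φ : ↥(HU K 1) →* Gp p t m // IsContHom φ ∧
        ∀ u : ↥(HU K 1), (u : (PowerSeries K)ˣ) ∈ HU K (k + 1) → φ u = 1}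
      = Q ^ (∑ e ∈ Finset.Icc 1 t, m e * (k - k / p ^ e)) := by
  classical
  subst hQ
  haveI : Fact p.Prime := ⟨hp⟩
  have hpK : ((p : K)) = 0 := by
    have hc : ((Fintype.card K : ℕ) : K) = 0 := FiniteField.cast_card_eq_zero K
    rw [hK] at hc
    push_cast at hc
    exact (pow_eq_zero_iff (by omega)).mp hc
  have hrc : ringChar K = p := by
    rcases hp.eq_one_or_self_of_dvd _ (ringChar.dvd hpK) with h1 | h2
    · exact absurd h1 (CharP.ringChar_ne_one (R := K))
    · exact h2
  haveI hchar : CharP K p := ringChar.of_eq hrc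
  haveI : Finite (↥(HU K 1) ⧸ auxN K k) := aux_finite k
  rw [aux_E1 k]
  have e2 : ((↥(HU K 1) ⧸ auxN K k) →* Gp p t m)
      ≃ ∀ e : Fin t, Fin (m (e.1 + 1)) →
          ((↥(HU K 1) ⧸ auxN K k) →* Multiplicative (ZMod (p ^ (e.1 + 1)))) := by
    refine (MulEquiv.monoidHomCongrRightEquiv
      ((MulEquiv.piMultiplicative _).trans
        (MulEquiv.piCongrRight fun e => MulEquiv.piMultiplicative _))).trans ?_
    exact (auxHomPi _).trans (Equiv.piCongrRight fun e => auxHomPi _)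
  rw [Nat.card_congr e2, Nat.card_pi]
  have hcomp : ∀ e' : ℕ,
      Nat.card ((↥(HU K 1) ⧸ auxN K k) →* Multiplicative (ZMod (p ^ e')))
        = Fintype.card K ^ (k - k / p ^ e') := by
    intro e'
    exact (aux_card_hom_eq_card_torsion (↥(HU K 1) ⧸ auxN K k) (p ^ e')
      (pow_ne_zero _ hp.ne_zero)).trans (aux_card_torsion p hp k e')
  have step : ∀ e : Fin t,
      Nat.card (Fin (m (e.1 + 1)) →
        ((↥(HU K 1) ⧸ auxN K k) →* Multiplicative (ZMod (p ^ (e.1 + 1)))))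
      = (p ^ d) ^ ((k - k / p ^ (e.1 + 1)) * m (e.1 + 1)) := by
    intro e
    rw [Nat.card_pi]
    simp only [hcomp]
    rw [Finset.prod_const, Finset.card_univ, Fintype.card_fin, hK, ← pow_mul]
  rw [Finset.prod_congr rfl fun e _ => step e, Finset.prod_pow_eq_pow_sum]
  congr 1
  rw [← Finset.Ico_add_one_right_eq_Icc, Finset.sum_Ico_eq_sum_range]
  simp only [Nat.add_sub_cancel, Nat.succ_sub_one]
  rw [← Fin.sum_univ_eq_sum_range (fun i => m (1 + i) * (k - k / p ^ (1 + i))) t]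
  refine Finset.sum_congr rfl fun e _ => ?_
  rw [Nat.add_comm 1 e.1, Nat.mul_comm]
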